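/- Let E be a unital trace-preserving completely positive map and P a projection. If supp(E†∘E(P)) ⊆ range(P), then E†∘E(P) = P. -/

import Mathlib

open Finset Matrix ComplexOrder

/-- Complete positivity via the existence of a Kraus representation. -/
def IsCP {I J : Type*} [Fintype I] [Fintype J]
    (E : Matrix I I ℂ →ₗ[ℂ] Matrix J J ℂ) : Prop :=
  ∃ (r : ℕ) (K : Fin r → Matrix J I ℂ), ∀ X, E X = ∑ a, K a * X * (K a)ᴴ


lemma psd_sum_aux {ι : Type*} {m : Type*} [Fintype m] (s : Finset ι)
    (f : ι → Matrix m m ℂ) (h : ∀ i ∈ s, (f i).PosSemidef) :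
    (∑ i ∈ s, f i).PosSemidef := by
  classical
  induction s using Finset.induction_on with
  | empty => simpa using Matrix.PosSemidef.zero
  | insert _ _ hx ih =>
    rw [Finset.sum_insert hx]
    exact (h _ (Finset.mem_insert_self _ _)).add
      (ih fun i hi => h i (Finset.mem_insert_of_mem hi))

lemma trace_ext_aux {n : ℕ} {M N : Matrix (Fin n) (Fin n) ℂ}
    (h : ∀ τ, (M * τ).trace = (N * τ).trace) : M = N := by
  ext i j
  have := h (Matrix.single j i 1)
  simpa [Matrix.trace, Matrix.diag, Matrix.mul_apply, Matrix.single,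
    Matrix.of_apply, mul_ite, ite_and, Finset.sum_ite_eq, Finset.sum_ite_eq'] using this

lemma psd_trace_zero_aux {m : Type*} [Fintype m] [DecidableEq m]
    {M : Matrix m m ℂ} (hM : M.PosSemidef) (h : M.trace = 0) : M = 0 := by
  exact hM.trace_eq_zero_iff.1 h

theorem adjoint_comp_fixes_of_support {n : ℕ}
    (E Edag : Matrix (Fin n) (Fin n) ℂ →ₗ[ℂ] Matrix (Fin n) (Fin n) ℂ)
    (hCP : IsCP E)
    (hTP : ∀ X, (E X).trace = X.trace)
    (hU : E 1 = 1)
    (hadj : ∀ σ τ : Matrix (Fin n) (Fin n) ℂ, (Edag σ * τ).trace = (σ * E τ).trace)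
    (P : Matrix (Fin n) (Fin n) ℂ)
    (hPh : P.IsHermitian) (hPP : P * P = P)
    (hsupp : LinearMap.range (Edag (E P)).mulVecLin ≤ LinearMap.range P.mulVecLin) :
    Edag (E P) = P := by
  obtain ⟨r, K, hK⟩ := hCP
  -- explicit formula for Edag
  have hEdag : ∀ σ, Edag σ = ∑ a, (K a)ᴴ * σ * K a := by
    intro σ
    apply trace_ext_aux
    intro τ
    rw [hadj, hK, Finset.mul_sum, Finset.sum_mul, Matrix.trace_sum, Matrix.trace_sum]
    refine Finset.sum_congr rfl fun a _ => ?_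
    rw [show (K a)ᴴ * σ * K a * τ = (K a)ᴴ * (σ * (K a * τ)) by
          simp only [Matrix.mul_assoc],
        show σ * (K a * τ * (K a)ᴴ) = σ * (K a * τ) * (K a)ᴴ by
          simp only [Matrix.mul_assoc],
        Matrix.trace_mul_comm]
  -- Edag preserves positive semidefiniteness
  have hEdagPSD : ∀ σ, σ.PosSemidef → (Edag σ).PosSemidef := by
    intro σ hσ
    rw [hEdag]
    exact psd_sum_aux _ _ fun a _ => hσ.conjTranspose_mul_mul_same (K a)
  -- Edag 1 = 1
  have hEdag1 : Edag 1 = 1 := by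
    apply trace_ext_aux
    intro τ
    rw [hadj, Matrix.one_mul, Matrix.one_mul, hTP]
  set Q := Edag (E P) with hQdef
  -- P is PSD
  have hPpsd : P.PosSemidef := by
    have : P = Pᴴ * P := by rw [hPh.eq, hPP]
    rw [this]; exact Matrix.posSemidef_conjTranspose_mul_self P
  -- 1 - P is PSD
  have h1Ppsd : (1 - P : Matrix (Fin n) (Fin n) ℂ).PosSemidef := by
    have h1 : (1 - P : Matrix (Fin n) (Fin n) ℂ)ᴴ = 1 - P := by
      rw [Matrix.conjTranspose_sub, Matrix.conjTranspose_one, hPh.eq]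
    have h2 : (1 - P : Matrix (Fin n) (Fin n) ℂ) * (1 - P) = 1 - P := by
      rw [Matrix.mul_sub, Matrix.mul_one, Matrix.sub_mul, Matrix.one_mul, hPP]
      abel
    have : (1 - P : Matrix (Fin n) (Fin n) ℂ) = (1 - P)ᴴ * (1 - P) := by rw [h1, h2]
    rw [this]; exact Matrix.posSemidef_conjTranspose_mul_self _
  -- E (1 - P) is PSD
  have hE1P : (E (1 - P)).PosSemidef := by
    rw [hK]
    exact psd_sum_aux _ _ fun a _ => h1Ppsd.mul_mul_conjTranspose_same (K a)
  -- 1 - Q is PSD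
  have h1Q : (1 - Q : Matrix (Fin n) (Fin n) ℂ).PosSemidef := by
    have : (1 - Q : Matrix (Fin n) (Fin n) ℂ) = Edag (E (1 - P)) := by
      rw [map_sub, map_sub, hU, hEdag1, hQdef]
    rw [this]
    exact hEdagPSD _ hE1P
  -- P * Q = Q from the support assumption
  have hPQ : P * Q = Q := by
    have hv : ∀ v, (P * Q) *ᵥ v = Q *ᵥ v := by
      intro v
      obtain ⟨u, hu⟩ := hsupp ⟨v, rfl⟩
      simp only [Matrix.mulVecLin_apply] at hu
      calc (P * Q) *ᵥ v = P *ᵥ (Q *ᵥ v) := by rw [Matrix.mulVec_mulVec]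
        _ = P *ᵥ (P *ᵥ u) := by rw [hu]
        _ = (P * P) *ᵥ u := by rw [Matrix.mulVec_mulVec]
        _ = P *ᵥ u := by rw [hPP]
        _ = Q *ᵥ v := hu
    ext i j
    have := congr_fun (hv (Pi.single j 1)) i
    simpa [Matrix.mulVec_single] using this
  -- Q is Hermitian
  have hQH : Q.IsHermitian := (hEdagPSD _ (by
    rw [hK]
    exact psd_sum_aux _ _ fun a _ => hPpsd.mul_mul_conjTranspose_same (K a))).isHermitian
  -- Q * P = Q
  have hQP : Q * P = Q := by
    have := congrArg Matrix.conjTranspose hPQ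
    rwa [Matrix.conjTranspose_mul, hPh.eq, hQH.eq] at this
  -- P - Q is PSD
  have hdiff : (P - Q).PosSemidef := by
    have h1 : P - Q = P * (1 - Q) * P := by
      rw [Matrix.mul_sub, Matrix.mul_one, hPQ, Matrix.sub_mul, hPP, hQP]
    rw [h1]
    have := h1Q.mul_mul_conjTranspose_same P
    rwa [hPh.eq] at this
  -- trace (P - Q) = 0
  have htr : (P - Q).trace = 0 := by
    have hQtr : Q.trace = P.trace := by
      have := hadj (E P) 1
      rwa [Matrix.mul_one, hU, Matrix.mul_one, hTP] at this
    rw [Matrix.trace_sub, hQtr, sub_self]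
  have := psd_trace_zero_aux hdiff htr
  have := sub_eq_zero.mp this
  rw [hQdef] at this
  exact this.symm
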